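/- Let d ≥ 2 and consider a two-point, two-strata stratified sampling scheme (p_1,p_2) in [0,1)^d where B_1, B_2 partition [0,1)^d into sets of measure 1/2, one point is placed uniformly in each stratum, and the assignment is randomized. If there exist boxes Q, R ∈ C_1^d with Q ⊆ B_1, B_2 ⊆ R, and R ≠ [0,1)^d with λ^d(Q) > 0, then the scheme is not pairwise negatively dependent: P(p_1 ∈ Q, p_2 ∈ R) > P(p_1 ∈ Q)P(p_2 ∈ R). -/

import Mathlib

open MeasureTheory ProbabilityTheory
open scoped ENNReal


private lemma aux_h2 : (2 : ℝ≥0∞) * 2⁻¹ = 1 :=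
  ENNReal.mul_inv_cancel (by norm_num) (by norm_num)

private lemma aux_h2' : (2 : ℝ≥0∞)⁻¹ * 2 = 1 :=
  ENNReal.inv_mul_cancel (by norm_num) (by norm_num)

private lemma aux_arith1 (x y : ℝ≥0∞) :
    2⁻¹ * ((2 * x) * (2 * 2⁻¹)) + 2⁻¹ * ((2 * 0) * y) = x := by
  rw [aux_h2, mul_one, mul_zero, zero_mul, mul_zero, add_zero, ← mul_assoc, aux_h2', one_mul]

private lemma aux_arith2 (x : ℝ≥0∞) :
    2⁻¹ * ((2 * 2⁻¹) * (2 * 2⁻¹)) + 2⁻¹ * ((2 * 2⁻¹) * (2 * x)) = x + 2⁻¹ := by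
  simp only [aux_h2, one_mul, mul_one]
  rw [← mul_assoc, aux_h2', one_mul, add_comm]

/-- A two-point stratified sampling scheme with two strata B₁, B₂ of measure 1/2 is not
pairwise negatively dependent when there are anchored-at-1 boxes Q ⊆ B₁ and R ⊇ B₂ with
R ≠ [0,1)^d and λ(Q) > 0. -/
theorem stmt_18 {Ω : Type*} [MeasureSpace Ω] [IsProbabilityMeasure (ℙ : Measure Ω)]
    {d : ℕ} (hd : 2 ≤ d)
    (B₁ B₂ : Set (Fin d → ℝ)) (hB₁ : MeasurableSet B₁) (hB₂ : MeasurableSet B₂)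
    (hdisj : Disjoint B₁ B₂)
    (hunion : B₁ ∪ B₂ = Set.univ.pi fun _ => Set.Ico (0 : ℝ) 1)
    (hvol₁ : volume B₁ = 2⁻¹) (hvol₂ : volume B₂ = 2⁻¹)
    (p₁ p₂ : Ω → (Fin d → ℝ)) (h₁ : Measurable p₁) (h₂ : Measurable p₂)
    -- the joint law: a fair coin decides which point goes to which stratum, then the two
    -- points are placed independently and uniformly in their strata
    (hlaw : Measure.map (fun ω => (p₁ ω, p₂ ω)) ℙ =
      ((2 : ℝ≥0∞))⁻¹ • (((2 : ℝ≥0∞) • volume.restrict B₁).prod ((2 : ℝ≥0∞) • volume.restrict B₂)) +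
      ((2 : ℝ≥0∞))⁻¹ • (((2 : ℝ≥0∞) • volume.restrict B₂).prod ((2 : ℝ≥0∞) • volume.restrict B₁)))
    (a b : Fin d → ℝ) (ha : ∀ i, a i ∈ Set.Ico (0 : ℝ) 1) (hb : ∀ i, b i ∈ Set.Ico (0 : ℝ) 1)
    -- Q = [a,1), R = [b,1)
    (hQB₁ : {x : Fin d → ℝ | ∀ i, a i ≤ x i ∧ x i < 1} ⊆ B₁)
    (hB₂R : B₂ ⊆ {x : Fin d → ℝ | ∀ i, b i ≤ x i ∧ x i < 1})
    (hRne : {x : Fin d → ℝ | ∀ i, b i ≤ x i ∧ x i < 1} ≠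
      Set.univ.pi fun _ => Set.Ico (0 : ℝ) 1)
    (hQpos : 0 < volume {x : Fin d → ℝ | ∀ i, a i ≤ x i ∧ x i < 1}) :
    ℙ ({ω | ∀ i, a i ≤ p₁ ω i ∧ p₁ ω i < 1} ∩ {ω | ∀ i, b i ≤ p₂ ω i ∧ p₂ ω i < 1}) >
      ℙ {ω | ∀ i, a i ≤ p₁ ω i ∧ p₁ ω i < 1} * ℙ {ω | ∀ i, b i ≤ p₂ ω i ∧ p₂ ω i < 1} := by
  classical
  set Q : Set (Fin d → ℝ) := {x | ∀ i, a i ≤ x i ∧ x i < 1} with hQdef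
  set R : Set (Fin d → ℝ) := {x | ∀ i, b i ≤ x i ∧ x i < 1} with hRdef
  have hQpi : Q = Set.univ.pi fun i => Set.Ico (a i) 1 := by
    ext x; simp [hQdef, Set.mem_pi, Set.mem_Ico]
  have hRpi : R = Set.univ.pi fun i => Set.Ico (b i) 1 := by
    ext x; simp [hRdef, Set.mem_pi, Set.mem_Ico]
  have hQm : MeasurableSet Q := by
    rw [hQpi]; exact MeasurableSet.univ_pi fun i => measurableSet_Ico
  have hRm : MeasurableSet R := by
    rw [hRpi]; exact MeasurableSet.univ_pi fun i => measurableSet_Ico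
  -- basic set identities
  have hQB₁' : Q ∩ B₁ = Q := Set.inter_eq_left.mpr hQB₁
  have hQB₂' : Q ∩ B₂ = ∅ := (hdisj.mono_left hQB₁).inter_eq
  have hRB₂' : R ∩ B₂ = B₂ := Set.inter_eq_right.mpr hB₂R
  -- measure facts
  have hQfin : volume Q ≠ ∞ := by
    have : volume Q ≤ 2⁻¹ := hvol₁ ▸ measure_mono hQB₁
    exact (this.trans_lt (by norm_num)).ne
  have hRsplit : R = (R ∩ B₁) ∪ B₂ := by
    apply subset_antisymm
    · intro x hx
      have hx' : x ∈ B₁ ∪ B₂ := by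
        rw [hunion]
        intro i _
        exact ⟨le_trans (hb i).1 (hx i).1, (hx i).2⟩
      rcases hx' with h | h
      · exact Or.inl ⟨hx, h⟩
      · exact Or.inr h
    · exact Set.union_subset Set.inter_subset_left hB₂R
  have hvolR_split : volume R = volume (R ∩ B₁) + 2⁻¹ := by
    conv_lhs => rw [hRsplit]
    rw [measure_union (hdisj.mono_left Set.inter_subset_right) hB₂, hvol₂]
  -- volume R < 1
  have hbj : ∃ j, 0 < b j := by
    by_contra h
    push_neg at h
    apply hRne
    ext x
    have hb0 : ∀ i, b i = 0 := fun i => le_antisymm (h i) (hb i).1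
    simp only [hRdef, Set.mem_setOf_eq, Set.mem_pi, Set.mem_univ, forall_true_left,
      Set.mem_Ico]
    constructor
    · intro hx i; exact ⟨(hb0 i) ▸ (hx i).1, (hx i).2⟩
    · intro hx i; exact ⟨(hb0 i) ▸ (hx i).1, (hx i).2⟩
  have hRlt1 : volume R < 1 := by
    obtain ⟨j, hj⟩ := hbj
    rw [hRpi, volume_pi_pi]
    have hprod : (∏ i, volume (Set.Ico (b i) 1)) = ∏ i, ENNReal.ofReal (1 - b i) := by
      simp [Real.volume_Ico]
    rw [hprod]
    have hrest : (∏ i ∈ Finset.univ.erase j, ENNReal.ofReal (1 - b i)) ≤ 1 := by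
      apply Finset.prod_le_one
      · intro i _; exact zero_le
      · intro i _
        exact ENNReal.ofReal_le_one.mpr (by linarith [(hb i).1])
    calc (∏ i, ENNReal.ofReal (1 - b i))
        = ENNReal.ofReal (1 - b j) * ∏ i ∈ Finset.univ.erase j, ENNReal.ofReal (1 - b i) :=
          (Finset.mul_prod_erase Finset.univ _ (Finset.mem_univ j)).symm
      _ ≤ ENNReal.ofReal (1 - b j) * 1 := mul_le_mul_right hrest _
      _ = ENNReal.ofReal (1 - b j) := mul_one _
      _ < 1 := ENNReal.ofReal_lt_one.mpr (by linarith)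
  -- evaluation of the joint law on rectangles
  have heval : ∀ (S T : Set (Fin d → ℝ)), MeasurableSet S → MeasurableSet T →
      ℙ ((fun ω => (p₁ ω, p₂ ω)) ⁻¹' (S ×ˢ T)) =
        2⁻¹ * ((2 * volume (S ∩ B₁)) * (2 * volume (T ∩ B₂))) +
        2⁻¹ * ((2 * volume (S ∩ B₂)) * (2 * volume (T ∩ B₁))) := by
    intro S T hS hT
    rw [← Measure.map_apply (h₁.prodMk h₂) (hS.prod hT), hlaw]
    simp [Measure.prod_prod, Measure.restrict_apply hS, Measure.restrict_apply hT]
  -- the three probabilities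
  have hjoint : ℙ ({ω | ∀ i, a i ≤ p₁ ω i ∧ p₁ ω i < 1} ∩
      {ω | ∀ i, b i ≤ p₂ ω i ∧ p₂ ω i < 1}) = volume Q := by
    have hpre : {ω | ∀ i, a i ≤ p₁ ω i ∧ p₁ ω i < 1} ∩ {ω | ∀ i, b i ≤ p₂ ω i ∧ p₂ ω i < 1}
        = (fun ω => (p₁ ω, p₂ ω)) ⁻¹' (Q ×ˢ R) := by
      ext ω; simp [hQdef, hRdef, Set.mem_prod]
    rw [hpre, heval Q R hQm hRm, hQB₁', hQB₂', hRB₂', hvol₂, measure_empty]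
    exact aux_arith1 _ _
  have hP1 : ℙ {ω | ∀ i, a i ≤ p₁ ω i ∧ p₁ ω i < 1} = volume Q := by
    have hpre : {ω | ∀ i, a i ≤ p₁ ω i ∧ p₁ ω i < 1}
        = (fun ω => (p₁ ω, p₂ ω)) ⁻¹' (Q ×ˢ (Set.univ : Set (Fin d → ℝ))) := by
      ext ω; simp [hQdef, Set.mem_prod]
    rw [hpre, heval Q Set.univ hQm MeasurableSet.univ, hQB₁', hQB₂', Set.univ_inter,
      Set.univ_inter, hvol₁, hvol₂, measure_empty]
    exact aux_arith1 _ _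
  have hP2 : ℙ {ω | ∀ i, b i ≤ p₂ ω i ∧ p₂ ω i < 1} = volume R := by
    have hpre : {ω | ∀ i, b i ≤ p₂ ω i ∧ p₂ ω i < 1}
        = (fun ω => (p₁ ω, p₂ ω)) ⁻¹' ((Set.univ : Set (Fin d → ℝ)) ×ˢ R) := by
      ext ω; simp [hRdef, Set.mem_prod]
    rw [hpre, heval Set.univ R MeasurableSet.univ hRm, Set.univ_inter, Set.univ_inter,
      hRB₂', hvol₁, hvol₂, hvolR_split]
    exact aux_arith2 _
  rw [hjoint, hP1, hP2]
  calc volume Q * volume R < volume Q * 1 := by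
        exact (ENNReal.mul_lt_mul_iff_right hQpos.ne' hQfin).mpr hRlt1
    _ = volume Q := mul_one _
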